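/- arXiv:1710.11314 — 3 statements merged into one kernel-verified Lean document; each statement's English description precedes it below -/
import Mathlib

section
/- Let C be a cycle of odd length k = 2γ+1 and write F = {H_1,…,H_r} for the family of all γ-element subsets of {1,…,k}, so r = C(k,γ). Then for every d ≥ 1 the affine Hilbert function of I(X*_C) satisfies H_{X*_C}(d) = |A_{H_1}(d) ∪ ⋯ ∪ A_{H_r}(d)|. -/
open MvPolynomial Finset

set_option linter.unusedSectionVars false
set_option maxHeartbeats 2000000

/-- The affine algebraic toric set parameterized by a cycle of length `k`:
`X*_C = {(x₁x₂, x₂x₃, …, x_{k−1}x_k, x_kx₁) : x_j ∈ K*} ⊆ K^k`. -/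
def cycleToricSet (K : Type) [Field K] (k : ℕ) : Set (Fin k → K) :=
  {y | ∃ x : Fin k → K, (∀ j, x j ≠ 0) ∧ ∀ j : Fin k, y j = x j * x (finRotate k j)}

/-- The affine Hilbert function of a set `X ⊆ K^σ`:
`H_X(d) = dim_K S_{≤d} / I(X)_{≤d}`. -/
noncomputable def affineHilbertFunction (K : Type) [Field K] {σ : Type} (X : Set (σ → K))
    (d : ℕ) : ℕ :=
  Module.finrank K
    (↥(MvPolynomial.restrictTotalDegree σ K d) ⧸
      Submodule.comap (MvPolynomial.restrictTotalDegree σ K d).subtype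
        (Submodule.restrictScalars K (MvPolynomial.vanishingIdeal K X)))

/-- The set `A_H(d)` of (exponent vectors of) monomials attached to a `γ`-element subset
`H ⊆ {1,…,k}`: exponents `< q−1` on `H`, exponents `< (q−1)/2` on the complement of `H`,
and total degree at most `d`. -/
def AH (q k d : ℕ) (H : Finset (Fin k)) : Set (Fin k → ℕ) :=
  {a | (∀ i ∈ H, a i < q - 1) ∧ (∀ j ∉ H, a j < (q - 1) / 2) ∧ ∑ i, a i ≤ d}

namespace HilbertCycleAux

/-- `X*_C` as a submonoid of `(Fin k → K)` under pointwise multiplication. -/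
def Xmon (K : Type) [Field K] (k : ℕ) : Submonoid (Fin k → K) where
  carrier := cycleToricSet K k
  one_mem' := ⟨fun _ => 1, fun _ => one_ne_zero, fun _ => (one_mul 1).symm⟩
  mul_mem' := by
    rintro a b ⟨x, hx, hxy⟩ ⟨x', hx', hxy'⟩
    exact ⟨x * x', fun j => mul_ne_zero (hx j) (hx' j), fun j => by
      simp [hxy j, hxy' j]; ring⟩

instance instMonoidX (K : Type) [Field K] (k : ℕ) : Monoid ↥(cycleToricSet K k) :=
  inferInstanceAs (Monoid (Xmon K k))

variable {K : Type} [Field K] [Fintype K] {k : ℕ}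

lemma X_ne_zero {y : Fin k → K} (hy : y ∈ cycleToricSet K k) (i : Fin k) : y i ≠ 0 := by
  obtain ⟨x, hx, hxy⟩ := hy
  rw [hxy i]; exact mul_ne_zero (hx i) (hx _)

lemma X_pow_one {y : Fin k → K} (hy : y ∈ cycleToricSet K k) (i : Fin k) :
    y i ^ (Fintype.card K - 1) = 1 :=
  FiniteField.pow_card_sub_one_eq_one _ (X_ne_zero hy i)

lemma X_prod_sq {y : Fin k → K} (hy : y ∈ cycleToricSet K k) :
    ∃ z : K, z ≠ 0 ∧ ∏ i, y i = z ^ 2 := by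
  obtain ⟨x, hx, hxy⟩ := hy
  refine ⟨∏ i, x i, prod_ne_zero_iff.2 fun i _ => hx i, ?_⟩
  calc ∏ i, y i = ∏ i, (x i * x (finRotate k i)) := prod_congr rfl fun i _ => hxy i
    _ = (∏ i, x i) * ∏ i, x (finRotate k i) := by rw [prod_mul_distrib]
    _ = (∏ i, x i) * ∏ i, x i := by rw [Equiv.prod_comp (finRotate k) x]
    _ = (∏ i, x i) ^ 2 := by ring

lemma X_prod_m {y : Fin k → K} (hy : y ∈ cycleToricSet K k) {m : ℕ}
    (hm : 2 * m = Fintype.card K - 1) (S : Finset (Fin k)) :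
    ∏ i ∈ S, y i ^ m = ∏ i ∈ Sᶜ, y i ^ m := by
  have hPQ : (∏ i ∈ S, y i ^ m) * ∏ i ∈ Sᶜ, y i ^ m = 1 := by
    rw [prod_mul_prod_compl]
    obtain ⟨z, hz, hzy⟩ := X_prod_sq hy
    rw [prod_pow, hzy, ← pow_mul, hm]
    exact FiniteField.pow_card_sub_one_eq_one _ hz
  have hP2 : (∏ i ∈ S, y i ^ m) * ∏ i ∈ S, y i ^ m = 1 := by
    rw [← prod_mul_distrib]
    calc ∏ i ∈ S, (y i ^ m * y i ^ m) = ∏ i ∈ S, y i ^ (2 * m) := by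
          refine prod_congr rfl fun i _ => ?_; rw [← pow_add]; ring_nf
      _ = 1 := by rw [hm]; exact prod_eq_one fun i _ => X_pow_one hy i
  have hP0 : (∏ i ∈ S, y i ^ m) ≠ 0 := by
    intro h; rw [h, zero_mul] at hP2; exact zero_ne_one hP2
  exact (mul_left_cancel₀ hP0 (hPQ.trans hP2.symm)).symm

/-- The "footprint" finset of standard exponent vectors. -/
def Bfin (n m k γ d : ℕ) : Finset (Fin k → ℕ) :=
  (Fintype.piFinset fun _ : Fin k => Finset.range n).filter
    (fun a => (univ.filter fun i => m ≤ a i).card ≤ γ ∧ ∑ i, a i ≤ d)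

lemma mem_Bfin {n m k γ d : ℕ} {a : Fin k → ℕ} :
    a ∈ Bfin n m k γ d ↔ (∀ i, a i < n) ∧
      (univ.filter fun i => m ≤ a i).card ≤ γ ∧ ∑ i, a i ≤ d := by
  simp [Bfin, Fintype.mem_piFinset]

/-- The monomial function on `X` with exponent vector `a`. -/
def monFun (K : Type) [Field K] (k : ℕ) (a : Fin k → ℕ) :
    ↥(cycleToricSet K k) → K :=
  fun x => ∏ i, (x : Fin k → K) i ^ a i

lemma monFun_mem_span {q m γ d : ℕ} (hq : Fintype.card K = q) (hm : 2 * m = q - 1)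
    (hm1 : 1 ≤ m) (hkγ : k = 2 * γ + 1) :
    ∀ s : ℕ, ∀ a : Fin k → ℕ, ∑ i, a i = s → ∑ i, a i ≤ d →
      monFun K k a ∈ Submodule.span K (monFun K k '' ↑(Bfin (q-1) m k γ d)) := by
  intro s
  induction s using Nat.strong_induction_on with
  | _ s ih =>
  intro a hs hd
  by_cases h1 : ∃ i, q - 1 ≤ a i
  · obtain ⟨i, hi⟩ := h1
    set a' : Fin k → ℕ := Function.update a i (a i - (q-1)) with ha'
    have hq2 : 2 ≤ q - 1 := by omega
    have heq : monFun K k a = monFun K k a' := by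
      funext x
      have h1x : ∀ j, (x : Fin k → K) j ^ a j
          = (x : Fin k → K) j ^ a' j * (if j = i then (x : Fin k → K) j ^ (q-1) else 1) := by
        intro j
        by_cases hj : j = i
        · subst hj
          rw [if_pos rfl, ha', Function.update_self, ← pow_add]
          congr 1; omega
        · rw [if_neg hj, mul_one, ha', Function.update_of_ne hj]
      show ∏ j, (x : Fin k → K) j ^ a j = _
      rw [prod_congr rfl fun j _ => h1x j, prod_mul_distrib,
        Finset.prod_ite_eq' univ i (fun j => (x : Fin k → K) j ^ (q-1)), if_pos (mem_univ i),
        ← hq, X_pow_one x.2 i, mul_one]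
      rfl
    have hsum : ∑ j, a' j + (q - 1) = s := by
      rw [ha', ← hs, Finset.sum_update_of_mem (mem_univ i)]
      have h5 : a i + ∑ j ∈ univ \ {i}, a j = ∑ j, a j := by
        rw [Finset.sdiff_singleton_eq_erase]
        exact Finset.add_sum_erase univ a (mem_univ i)
      omega
    rw [heq]
    exact ih (∑ j, a' j) (by omega) a' rfl (by omega)
  · push_neg at h1
    by_cases h2 : γ + 1 ≤ (univ.filter fun i => m ≤ a i).card
    · set S : Finset (Fin k) := univ.filter fun i => m ≤ a i with hS
      have hmem : ∀ j ∈ S, m ≤ a j := fun j hj => (Finset.mem_filter.1 hj).2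
      set a' : Fin k → ℕ := fun j => if j ∈ S then a j - m else a j + m with ha'
      have heq : monFun K k a = monFun K k a' := by
        funext x
        have hm' : 2 * m = Fintype.card K - 1 := by rw [hq]; exact hm
        have key := X_prod_m x.2 hm' S
        show ∏ j, (x : Fin k → K) j ^ a j = ∏ j, (x : Fin k → K) j ^ a' j
        rw [← prod_mul_prod_compl S (fun j => (x : Fin k → K) j ^ a j),
            ← prod_mul_prod_compl S (fun j => (x : Fin k → K) j ^ a' j)]
        have hL : ∏ j ∈ S, (x : Fin k → K) j ^ a j
            = (∏ j ∈ S, (x : Fin k → K) j ^ a' j) * ∏ j ∈ S, (x : Fin k → K) j ^ m := by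
          rw [← prod_mul_distrib]
          refine prod_congr rfl fun j hj => ?_
          rw [ha']; simp only [if_pos hj]
          rw [← pow_add]
          congr 1
          have := hmem j hj; omega
        have hR : ∏ j ∈ Sᶜ, (x : Fin k → K) j ^ a' j
            = (∏ j ∈ Sᶜ, (x : Fin k → K) j ^ a j) * ∏ j ∈ Sᶜ, (x : Fin k → K) j ^ m := by
          rw [← prod_mul_distrib]
          refine prod_congr rfl fun j hj => ?_
          rw [ha']; simp only [if_neg (Finset.mem_compl.1 hj)]
          rw [← pow_add]
        rw [hL, hR, ← key]
        ring
      have hcards : S.card + Sᶜ.card = k := by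
        rw [Finset.card_add_card_compl, Fintype.card_fin]
      have hccard : Sᶜ.card ≤ γ := by omega
      have hsum' : ∑ j, a' j + m * S.card = ∑ j, a j + m * Sᶜ.card := by
        rw [← Finset.sum_add_sum_compl S a', ← Finset.sum_add_sum_compl S a]
        have e1 : ∑ j ∈ S, a' j + m * S.card = ∑ j ∈ S, a j := by
          rw [mul_comm, ← smul_eq_mul, ← Finset.sum_const, ← Finset.sum_add_distrib]
          refine Finset.sum_congr rfl fun j hj => ?_
          rw [ha']; simp only [if_pos hj]
          have := hmem j hj; omega
        have e2 : ∑ j ∈ Sᶜ, a' j = ∑ j ∈ Sᶜ, a j + m * Sᶜ.card := by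
          rw [mul_comm, ← smul_eq_mul, ← Finset.sum_const, ← Finset.sum_add_distrib]
          refine Finset.sum_congr rfl fun j hj => ?_
          rw [ha']; simp only [if_neg (Finset.mem_compl.1 hj)]
        omega
      have h3 : m * Sᶜ.card + m ≤ m * S.card := by
        have h4 := Nat.mul_le_mul_left m (show Sᶜ.card + 1 ≤ S.card from by omega)
        rwa [Nat.mul_add, Nat.mul_one] at h4
      rw [heq]
      exact ih (∑ j, a' j) (by omega) a' rfl (by omega)
    · refine Submodule.subset_span ⟨a, ?_, rfl⟩
      rw [Finset.mem_coe, mem_Bfin]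
      exact ⟨h1, by omega, hd⟩

lemma pow_all_units_modEq (c c' : ℕ)
    (h : ∀ u : K, u ≠ 0 → u ^ c = u ^ c') : c ≡ c' [MOD Fintype.card K - 1] := by
  obtain ⟨g, hg⟩ := IsCyclic.exists_generator (α := Kˣ)
  have h2 : g ^ c = g ^ c' := by
    ext
    push_cast
    exact h _ (Units.ne_zero g)
  have h3 := (pow_eq_pow_iff_modEq).1 h2
  rwa [orderOf_eq_card_of_forall_mem_zpowers hg, Nat.card_units,
    Nat.card_eq_fintype_card] at h3

lemma char_exponent {k' : ℕ} (hk2 : 1 ≤ k')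
    (j : Fin (k'+1)) (u : K) (hu : u ≠ 0) :
    ∃ y ∈ cycleToricSet K (k'+1),
      (∀ c : Fin (k'+1) → ℕ, ∏ i, y i ^ c i = u ^ (c (j-1) + c j)) := by
  classical
  have hone : (1 : Fin (k'+1)) ≠ 0 := by
    rw [Ne, Fin.one_eq_zero_iff]; omega
  have hsub : j - 1 ≠ j := by
    intro h
    have h3 : j + 0 = j + 1 := by
      rw [add_zero]; exact (sub_eq_iff_eq_add.mp h)
    exact hone (add_left_cancel h3).symm
  have haddne : j + 1 ≠ j := by
    intro h
    have h3 : j + 1 = j + 0 := by rw [add_zero]; exact h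
    exact hone (add_left_cancel h3)
  set x : Fin (k'+1) → K := Function.update (fun _ => (1:K)) j u with hx
  have hxv : ∀ t, x t = if t = j then u else 1 := by
    intro t; by_cases h : t = j <;> simp [hx, h, Function.update]
  have hxne : ∀ t, x t ≠ 0 := by
    intro t; rw [hxv t]; split <;> simp [hu]
  refine ⟨fun i => x i * x (finRotate _ i), ⟨x, hxne, fun _ => rfl⟩, ?_⟩
  intro c
  set y : Fin (k'+1) → K := fun i => x i * x (finRotate _ i) with hy
  have hyv : ∀ i, y i = if i = j then u else if i = j - 1 then u else 1 := by
    intro i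
    rw [hy]
    simp only [finRotate_succ_apply]
    by_cases h1 : i = j
    · subst h1
      rw [if_pos rfl, hxv, hxv, if_pos rfl, if_neg haddne, mul_one]
    · rw [if_neg h1]
      by_cases h2 : i = j - 1
      · subst h2
        rw [if_pos rfl, hxv, hxv, if_neg h1, if_pos (sub_add_cancel j 1), one_mul]
      · rw [if_neg h2, hxv, hxv, if_neg h1, if_neg (by
          intro h; exact h2 (eq_sub_iff_add_eq.mpr h)), one_mul]
  have hprod : ∏ i, y i ^ c i = ∏ i ∈ ({j - 1, j} : Finset (Fin (k'+1))), y i ^ c i := by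
    refine (Finset.prod_subset (Finset.subset_univ _) ?_).symm
    intro t _ ht
    simp only [Finset.mem_insert, Finset.mem_singleton, not_or] at ht
    rw [hyv, if_neg ht.2, if_neg ht.1, one_pow]
  rw [hprod, Finset.prod_pair hsub, hyv, hyv, if_neg hsub, if_pos rfl, if_pos rfl, pow_add]

open Fin.NatCast Fin.CommRing in
lemma exps_eq {q m γ k' : ℕ} (hq : Fintype.card K = q)
    (hm : 2 * m = q - 1) (hm1 : 1 ≤ m) (hγ : 1 ≤ γ) (hk : k' + 1 = 2 * γ + 1)
    {b b' : Fin (k'+1) → ℕ}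
    (hb : ∀ i, b i < q - 1) (hb' : ∀ i, b' i < q - 1)
    (hcb : (univ.filter fun i => m ≤ b i).card ≤ γ)
    (hcb' : (univ.filter fun i => m ≤ b' i).card ≤ γ)
    (h : ∀ y ∈ cycleToricSet K (k'+1), ∏ i, y i ^ b i = ∏ i, y i ^ b' i) : b = b' := by
  classical
  set n := 2 * m with hn
  haveI : NeZero n := ⟨by omega⟩
  have hk2 : 1 ≤ k' := by omega
  have hmod : ∀ j : Fin (k'+1), (b (j-1) + b j) ≡ (b' (j-1) + b' j) [MOD n] := by
    intro j
    have : (b (j-1) + b j) ≡ (b' (j-1) + b' j) [MOD Fintype.card K - 1] := by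
      apply pow_all_units_modEq
      intro u hu
      obtain ⟨y, hyX, hyc⟩ := char_exponent hk2 j u hu
      rw [← hyc b, ← hyc b', h y hyX]
    rwa [hq, ← hm] at this
  set δ : Fin (k'+1) → ZMod n := fun j => (b j : ZMod n) - b' j with hδdef
  have hδ : ∀ j, δ (j - 1) + δ j = 0 := by
    intro j
    have h1 : ((b (j-1) + b j : ℕ) : ZMod n) = ((b' (j-1) + b' j : ℕ) : ZMod n) :=
      (ZMod.natCast_eq_natCast_iff _ _ _).2 (hmod j)
    push_cast at h1
    simp only [hδdef]
    linear_combination h1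
  have hstep : ∀ j, δ (j + 1) = - δ j := by
    intro j
    have h1 := hδ (j + 1)
    rw [add_sub_cancel_right] at h1
    linear_combination h1
  have hnat : ∀ t : ℕ, δ ((t : ℕ) : Fin (k'+1)) = (-1)^t * δ 0 := by
    intro t
    induction t with
    | zero => simp
    | succ t ih =>
      have hc : ((t+1 : ℕ) : Fin (k'+1)) = ((t : ℕ) : Fin (k'+1)) + 1 := by push_cast; ring
      rw [hc, hstep, ih, pow_succ]
      ring
  have h2 : δ 0 + δ 0 = 0 := by
    have h5 := hnat (k'+1)
    rw [Fin.natCast_self] at h5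
    have hodd : Odd (k'+1) := hk ▸ ⟨γ, by ring⟩
    rw [hodd.neg_one_pow] at h5
    linear_combination h5
  have hall : ∀ j, δ j = δ 0 := by
    intro j
    have h6 := hnat (j : ℕ)
    rw [Fin.cast_val_eq_self] at h6
    rcases Nat.even_or_odd (j : ℕ) with he | ho
    · rw [he.neg_one_pow, one_mul] at h6; exact h6
    · rw [ho.neg_one_pow] at h6; rw [h6]; linear_combination -h2
  have h7 : δ 0 = 0 ∨ δ 0 = (m : ZMod n) := by
    set v := (δ 0).val with hv
    have hvn : v < n := ZMod.val_lt _
    have hcast : ((v:ℕ) : ZMod n) = δ 0 := by rw [hv, ZMod.natCast_val, ZMod.cast_id]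
    have h8 : ((2*v : ℕ) : ZMod n) = 0 := by push_cast; rw [hcast]; linear_combination h2
    have h9 : n ∣ 2*v := (ZMod.natCast_eq_zero_iff _ _).1 h8
    have h10 : m ∣ v := by
      obtain ⟨c, hc⟩ := h9
      rw [hn] at hc
      have hc2 : 2 * v = 2 * (m * c) := by rw [hc]; ring
      exact ⟨c, by omega⟩
    obtain ⟨c, hc⟩ := h10
    match c, hc with
    | 0, hc => left; rw [← hcast, hc]; simp
    | 1, hc => right; rw [← hcast, hc]; simp
    | (c+2), hc =>
      exfalso
      have : v = m * c + 2 * m := by rw [hc]; ring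
      omega
  rcases h7 with hz | hmm
  · funext j
    have h11 : (b j : ZMod n) = b' j := by
      have := (hall j).trans hz
      simpa [hδdef, sub_eq_zero] using this
    have h12 := (ZMod.natCast_eq_natCast_iff _ _ _).1 h11
    exact Nat.ModEq.eq_of_lt_of_lt h12 (by have := hb j; omega) (by have := hb' j; omega)
  · exfalso
    have hmodj : ∀ j, b j ≡ b' j + m [MOD n] := by
      intro j
      refine (ZMod.natCast_eq_natCast_iff _ _ _).1 ?_
      push_cast
      have := (hall j).trans hmm
      simp only [hδdef] at this
      linear_combination this
    have hbig : ∀ j, (m ≤ b j ↔ ¬ m ≤ b' j) := by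
      intro j
      have hbj := hb j; have hbj' := hb' j
      constructor
      · intro h1 h2'
        have e1 : b' j + m = (b' j - m) + n := by omega
        have e2 : b j ≡ (b' j - m) + n [MOD n] := e1 ▸ hmodj j
        have e3 : (b' j - m) + n ≡ (b' j - m) + 0 [MOD n] :=
          Nat.ModEq.add_left _ ((Nat.modEq_zero_iff_dvd).2 dvd_rfl)
        have e4 : b j ≡ b' j - m [MOD n] := by simpa using e2.trans e3
        have e5 : b j = b' j - m := Nat.ModEq.eq_of_lt_of_lt e4 (by omega) (by omega)
        omega
      · intro h1
        push_neg at h1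
        by_contra h2'
        push_neg at h2'
        have e5 : b j = b' j + m := Nat.ModEq.eq_of_lt_of_lt (hmodj j) (by omega) (by omega)
        omega
    have hfe : (univ.filter fun i => m ≤ b i) = (univ.filter fun i => ¬ m ≤ b' i) :=
      Finset.filter_congr fun i _ => by rw [hbig i]
    have hcc := Finset.card_filter_add_card_filter_not
      (s := (univ : Finset (Fin (k'+1)))) (p := fun i => m ≤ b' i)
    rw [Finset.card_univ, Fintype.card_fin] at hcc
    rw [hfe] at hcb
    omega

/-- The monomial function as a monoid hom on `X`. -/
def Φ (K : Type) [Field K] (k : ℕ) (a : Fin k → ℕ) : ↥(cycleToricSet K k) →* K where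
  toFun := monFun K k a
  map_one' := by
    show ∏ i, ((1 : ↥(cycleToricSet K k)) : Fin k → K) i ^ a i = 1
    exact Finset.prod_eq_one fun i _ => one_pow _
  map_mul' := by
    intro x y
    show ∏ i, ((x * y : ↥(cycleToricSet K k)) : Fin k → K) i ^ a i
      = (∏ i, (x : Fin k → K) i ^ a i) * ∏ i, (y : Fin k → K) i ^ a i
    rw [← prod_mul_distrib]
    exact Finset.prod_congr rfl fun i _ => by
      show ((x : Fin k → K) i * (y : Fin k → K) i) ^ a i = _
      rw [mul_pow]

lemma monFun_linearIndependent {q m γ d : ℕ} (hq : Fintype.card K = q)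
    (hm : 2 * m = q - 1) (hm1 : 1 ≤ m) (hγ : 1 ≤ γ) {k' : ℕ} (hk : k' + 1 = 2 * γ + 1) :
    LinearIndependent K
      (fun b : ↥(Bfin (q-1) m (k'+1) γ d) => monFun K (k'+1) (b : Fin (k'+1) → ℕ)) := by
  have hinj : Function.Injective
      (fun b : ↥(Bfin (q-1) m (k'+1) γ d) => Φ K (k'+1) (b : Fin (k'+1) → ℕ)) := by
    intro b b' hbb
    have hmemb := (mem_Bfin (n := q-1) (m := m) (k := k'+1) (γ := γ) (d := d)).1 b.2
    have hmemb' := (mem_Bfin (n := q-1) (m := m) (k := k'+1) (γ := γ) (d := d)).1 b'.2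
    apply Subtype.ext
    refine exps_eq hq hm hm1 hγ hk (fun i => hmemb.1 i) (fun i => hmemb'.1 i)
      hmemb.2.1 hmemb'.2.1 ?_
    intro y hy
    exact DFunLike.congr_fun hbb (⟨y, hy⟩ : ↥(cycleToricSet K (k'+1)))
  have h1 : LinearIndependent K
      (fun b : ↥(Bfin (q-1) m (k'+1) γ d) => ⇑(Φ K (k'+1) (b : Fin (k'+1) → ℕ))) :=
    (linearIndependent_monoidHom (↥(cycleToricSet K (k'+1))) K).comp _ hinj
  have h2 : (fun b : ↥(Bfin (q-1) m (k'+1) γ d) => ⇑(Φ K (k'+1) (b : Fin (k'+1) → ℕ)))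
      = fun b : ↥(Bfin (q-1) m (k'+1) γ d) => monFun K (k'+1) (b : Fin (k'+1) → ℕ) := by
    funext b; rfl
  exact h2 ▸ h1

end HilbertCycleAux

open HilbertCycleAux in
/-- Let `C` be a cycle of odd length `k = 2γ+1` and let `H₁,…,H_r` be the
`γ`-element subsets of `{1,…,k}`. Then for every `d ≥ 1`,
`H_{X*_C}(d) = |A_{H₁}(d) ∪ ⋯ ∪ A_{H_r}(d)|`. -/
theorem hilbert_cycle_eq_card_union (q k γ : ℕ) (hγ : 1 ≤ γ) (hk : k = 2 * γ + 1)
    (K : Type) [Field K] [Fintype K] (hq : Fintype.card K = q) (hq2 : 2 ∣ q - 1)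
    (d : ℕ) (hd : 1 ≤ d) :
    affineHilbertFunction K (cycleToricSet K k) d =
      (⋃ H ∈ {H : Finset (Fin k) | H.card = γ}, AH q k d H).ncard := by
  classical
  subst hk
  have h2 : 2 ≤ Fintype.card K := Fintype.one_lt_card
  have hq3 : 3 ≤ q := by omega
  set k := 2 * γ + 1 with hk
  set m := (q - 1) / 2 with hmdef
  have hm : 2 * m = q - 1 := by omega
  have hm1 : 1 ≤ m := by omega
  set B := Bfin (q-1) m k γ d with hB
  set X := cycleToricSet K k with hX
  -- Right-hand side: the union of the `A_H(d)` is the footprint `B`.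
  have hRHS : (⋃ H ∈ {H : Finset (Fin k) | H.card = γ}, AH q k d H) = ↑B := by
    ext a
    simp only [Set.mem_iUnion, Set.mem_setOf_eq, Finset.mem_coe, hB, mem_Bfin, AH,
      exists_prop, ← hmdef]
    constructor
    · rintro ⟨H, hHcard, h1, h2', h3⟩
      refine ⟨fun i => ?_, ?_, h3⟩
      · by_cases hi : i ∈ H
        · exact h1 i hi
        · have := h2' i hi; omega
      · have hsub : (univ.filter fun i => m ≤ a i) ⊆ H := by
          intro i hi
          rw [Finset.mem_filter] at hi
          by_contra hiH
          have := h2' i hiH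
          omega
        calc (univ.filter fun i => m ≤ a i).card ≤ H.card := Finset.card_le_card hsub
          _ = γ := hHcard
    · rintro ⟨h1, h2', h3⟩
      obtain ⟨H, hsub, _, hHcard⟩ :=
        Finset.exists_subsuperset_card_eq
          (Finset.subset_univ (univ.filter fun i => m ≤ a i)) h2'
          (by rw [Finset.card_univ, Fintype.card_fin]; omega)
      refine ⟨H, hHcard, fun i _ => h1 i, fun j hj => ?_, h3⟩
      by_contra hja
      push_neg at hja
      exact hj (hsub (Finset.mem_filter.2 ⟨Finset.mem_univ j, hja⟩))
  rw [hRHS, Set.ncard_coe_finset]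
  -- Left-hand side: the evaluation map.
  set V := restrictTotalDegree (Fin k) K d with hV
  set ev : ↥V →ₗ[K] (↥X → K) :=
    { toFun := fun p x => MvPolynomial.eval (x : Fin k → K) (p : MvPolynomial (Fin k) K)
      map_add' := by intro p p'; funext x; simp
      map_smul' := by intro c p; funext x; simp } with hev
  have hker : Submodule.comap V.subtype
      (Submodule.restrictScalars K (vanishingIdeal K X)) = LinearMap.ker ev := by
    ext p
    simp only [Submodule.mem_comap, Submodule.restrictScalars_mem, mem_vanishingIdeal_iff,
      LinearMap.mem_ker, Submodule.coe_subtype]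
    constructor
    · intro h
      funext x
      exact h x x.2
    · intro h y hy
      exact congrFun h ⟨y, hy⟩
  have hsets : monFun K k '' ↑B = Set.range (fun b : ↥B => monFun K k (b : Fin k → ℕ)) := by
    ext f
    constructor
    · rintro ⟨b, hbB, rfl⟩
      exact ⟨⟨b, Finset.mem_coe.1 hbB⟩, rfl⟩
    · rintro ⟨b, rfl⟩
      exact ⟨(b : Fin k → ℕ), Finset.mem_coe.2 b.2, rfl⟩
  have hrange : LinearMap.range ev
      = Submodule.span K (Set.range (fun b : ↥B => monFun K k (b : Fin k → ℕ))) := by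
    rw [← hsets]
    apply le_antisymm
    · rintro f ⟨p, rfl⟩
      have hdeg : ∀ s ∈ (p : MvPolynomial (Fin k) K).support, (∑ i, s i) ≤ d := by
        intro s hs
        have hd1 := MvPolynomial.le_totalDegree hs
        have hd2 := (mem_restrictTotalDegree _ d (p : MvPolynomial (Fin k) K)).1 p.2
        have hd3 : (s.sum fun _ e => e) = ∑ i, s i := Finsupp.sum_fintype _ _ (fun _ => rfl)
        omega
      have hevp : ev p = ∑ s ∈ (p : MvPolynomial (Fin k) K).support,
          MvPolynomial.coeff s (p : MvPolynomial (Fin k) K) • monFun K k (⇑s) := by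
        funext x
        simp only [Finset.sum_apply, Pi.smul_apply, smul_eq_mul, hev, LinearMap.coe_mk,
          AddHom.coe_mk, monFun]
        exact MvPolynomial.eval_eq' (x : Fin k → K) (p : MvPolynomial (Fin k) K)
      rw [hevp]
      exact Submodule.sum_mem _ fun s hs => Submodule.smul_mem _ _
        (monFun_mem_span hq hm hm1 hk _ (⇑s) rfl (hdeg s hs))
    · rw [Submodule.span_le]
      rintro f ⟨b, hbB, rfl⟩
      rw [Finset.mem_coe, hB, mem_Bfin] at hbB
      refine ⟨⟨monomial (Finsupp.equivFunOnFinite.symm b) 1, ?_⟩, ?_⟩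
      · rw [mem_restrictTotalDegree, totalDegree_monomial _ (one_ne_zero : (1:K) ≠ 0),
          Finsupp.sum_fintype _ _ (fun _ => rfl)]
        simpa using hbB.2.2
      · funext x
        show MvPolynomial.eval _ _ = _
        rw [eval_monomial, Finsupp.prod_pow]
        simp [monFun]
  have hind : LinearIndependent K (fun b : ↥B => monFun K k (b : Fin k → ℕ)) :=
    monFun_linearIndependent (k' := 2*γ) hq hm hm1 hγ rfl
  have hfr : Module.finrank K ↥(LinearMap.range ev) = B.card := by
    rw [hrange, finrank_span_eq_card hind, Fintype.card_coe]
  have efin : (↥V ⧸ Submodule.comap V.subtype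
      (Submodule.restrictScalars K (vanishingIdeal K X))) ≃ₗ[K] ↥(LinearMap.range ev) :=
    (Submodule.quotEquivOfEq _ _ hker).trans (LinearMap.quotKerEquivRange ev)
  exact efin.finrank_eq.trans hfr
end

section
/- For 0 ≤ i ≤ γ < k, the vanishing ideal of the degenerate torus X*_i = {(x_1,…,x_i,x_{i+1}^2,…,x_k^2) : x_1,…,x_k ∈ K*} ⊆ K^k is I(X*_i) = ⟨t_1^{q−1}−1, …, t_i^{q−1}−1, t_{i+1}^{(q−1)/2}−1, …, t_k^{(q−1)/2}−1⟩ in S = K[t_1,…,t_k]. -/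
open MvPolynomial

/-- The degenerate torus `X*_i = {(x₁,…,x_i,x_{i+1}²,…,x_k²) : x_j ∈ K*} ⊆ K^k`:
the first `i` coordinates are arbitrary nonzero elements and the remaining ones are
nonzero squares. -/
def degenerateTorus (K : Type) [Field K] (k i : ℕ) : Set (Fin k → K) :=
  {y | ∃ x : Fin k → K, (∀ j, x j ≠ 0) ∧
    ∀ j : Fin k, y j = if (j : ℕ) < i then x j else x j ^ 2}

/-- A multivariate polynomial whose degree in each variable is less than the size of a
finite grid on which it vanishes must be zero. -/
private lemma grid_vanish {K : Type} [Field K] :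
    ∀ (n : ℕ) (A : Fin n → Finset K) (f : MvPolynomial (Fin n) K),
    (∀ j, f.degreeOf j < (A j).card) →
    (∀ x : Fin n → K, (∀ j, x j ∈ A j) → eval x f = 0) → f = 0 := by
  intro n
  induction n with
  | zero =>
    intro A f _ hv
    have h := hv (fun j => j.elim0) (fun j => j.elim0)
    rw [eq_C_of_isEmpty f] at h ⊢
    rw [eval_C] at h
    rw [h, map_zero]
  | succ n ih =>
    intro A f hdeg hv
    have hg : finSuccEquiv K n f = 0 := by
      refine Polynomial.ext fun m => ?_
      rw [Polynomial.coeff_zero]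
      refine ih (fun j => A j.succ) _
        (fun j => lt_of_le_of_lt (degreeOf_coeff_finSuccEquiv f j m) (hdeg j.succ)) ?_
      intro x hx
      have hp : Polynomial.map (eval x) (finSuccEquiv K n f) = 0 := by
        refine Polynomial.eq_zero_of_natDegree_lt_card_of_eval_eq_zero' _ (A 0) ?_ ?_
        · intro y hy
          rw [← eval_eq_eval_mv_eval']
          refine hv (Fin.cons y x) ?_
          intro j
          refine Fin.cases ?_ ?_ j
          · simpa using hy
          · intro j'; simpa using hx j'
        · calc (Polynomial.map (eval x) (finSuccEquiv K n f)).natDegree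
              ≤ (finSuccEquiv K n f).natDegree := Polynomial.natDegree_map_le
            _ = degreeOf 0 f := natDegree_finSuccEquiv f
            _ < (A 0).card := hdeg 0
      have h2 := congrArg (fun p : Polynomial K => p.coeff m) hp
      simpa [Polynomial.coeff_map] using h2
    exact (finSuccEquiv K n).injective (hg.trans (map_zero _).symm)

/-- If `d` divides `#K - 1`, there are at least `d` solutions of `y ^ d = 1` in `K`. -/
private lemma card_pow_roots {K : Type} [Field K] [Fintype K] [DecidableEq K] {d : ℕ}
    (hd : 0 < d) (hdvd : d ∣ Fintype.card K - 1) :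
    d ≤ (Finset.univ.filter fun y : K => y ^ d = 1).card := by
  obtain ⟨g, hg⟩ := IsCyclic.exists_generator (α := Kˣ)
  have hco : orderOf g = Fintype.card K - 1 := by
    rw [orderOf_eq_card_of_forall_mem_zpowers hg, Nat.card_eq_fintype_card, Fintype.card_units]
  have hq1 : Fintype.card K - 1 ≠ 0 := by
    have := Fintype.one_lt_card (α := K); omega
  set h := g ^ ((Fintype.card K - 1) / d) with hh
  have hmdvd : (Fintype.card K - 1) / d ∣ Fintype.card K - 1 := Nat.div_dvd_of_dvd hdvd
  have hoh : orderOf h = d := by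
    rw [hh, orderOf_pow, hco, Nat.gcd_eq_right hmdvd, Nat.div_div_self hdvd hq1]
  calc d = (Finset.range d).card := (Finset.card_range d).symm
    _ = ((Finset.range d).image fun m => ((h ^ m : Kˣ) : K)).card := by
        rw [Finset.card_image_of_injOn]
        intro a ha b hb hab
        exact pow_injOn_Iio_orderOf (x := h)
          (by rw [hoh]; exact Finset.mem_range.mp ha)
          (by rw [hoh]; exact Finset.mem_range.mp hb) (Units.ext hab)
    _ ≤ _ := by
        apply Finset.card_le_card
        intro y hy
        simp only [Finset.mem_image, Finset.mem_range] at hy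
        obtain ⟨m, _, rfl⟩ := hy
        simp only [Finset.mem_filter, Finset.mem_univ, true_and]
        have h1 : (h ^ m) ^ d = 1 := by
          rw [← pow_mul, mul_comm, pow_mul, ← hoh, pow_orderOf_eq_one, one_pow]
        rw [← Units.val_pow_eq_pow_val, h1, Units.val_one]

/-- For `0 ≤ i ≤ γ < k`, the vanishing ideal of the degenerate torus
`X*_i` is `I(X*_i) = ⟨t₁^{q−1}−1, …, t_i^{q−1}−1, t_{i+1}^{(q−1)/2}−1, …, t_k^{(q−1)/2}−1⟩`. -/
theorem vanishingIdeal_degenerateTorus (q k γ i : ℕ) (hiγ : i ≤ γ) (hγk : γ < k)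
    (K : Type) [Field K] [Fintype K] (hq : Fintype.card K = q) (hq2 : 2 ∣ q - 1) :
    MvPolynomial.vanishingIdeal K (degenerateTorus K k i) =
      Ideal.span {p : MvPolynomial (Fin k) K | ∃ j : Fin k,
        p = if (j : ℕ) < i then X j ^ (q - 1) - 1 else X j ^ ((q - 1) / 2) - 1} := by
  classical
  subst hq
  have h1q : 1 < Fintype.card K := Fintype.one_lt_card
  have hq1 : Fintype.card K - 1 ≠ 0 := by omega
  have hchar : ringChar K ≠ 2 := by
    intro hc
    have := FiniteField.even_card_of_char_two hc
    omega
  set Gens := {p : MvPolynomial (Fin k) K | ∃ j : Fin k,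
      p = if (j : ℕ) < i then X j ^ (Fintype.card K - 1) - 1
          else X j ^ ((Fintype.card K - 1) / 2) - 1} with hGens
  set d : Fin k → ℕ :=
    fun j => if (j : ℕ) < i then Fintype.card K - 1 else (Fintype.card K - 1) / 2 with hd
  have hdpos : ∀ j, 0 < d j := by
    intro j; simp only [hd]; split_ifs <;> omega
  have hddvd : ∀ j, d j ∣ Fintype.card K - 1 := by
    intro j; simp only [hd]; split_ifs
    · exact dvd_rfl
    · exact Nat.div_dvd_of_dvd hq2
  have hgen : ∀ j : Fin k,
      (if (j : ℕ) < i then X j ^ (Fintype.card K - 1) - 1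
        else X j ^ ((Fintype.card K - 1) / 2) - 1)
        = (X j ^ d j - 1 : MvPolynomial (Fin k) K) := by
    intro j; simp only [hd]; split_ifs <;> rfl
  have htor1 : ∀ y ∈ degenerateTorus K k i, ∀ j, y j ^ d j = 1 := by
    rintro y ⟨x, hx0, hxy⟩ j
    rw [hxy j]; simp only [hd]
    split_ifs with hj
    · exact FiniteField.pow_card_sub_one_eq_one _ (hx0 j)
    · rw [← pow_mul, mul_comm, Nat.div_mul_cancel hq2]
      exact FiniteField.pow_card_sub_one_eq_one _ (hx0 j)
  have htor2 : ∀ y : Fin k → K, (∀ j, y j ^ d j = 1) → y ∈ degenerateTorus K k i := by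
    intro y hy
    have key : ∀ j : Fin k, ∃ x : K, x ≠ 0 ∧ y j = if (j : ℕ) < i then x else x ^ 2 := by
      intro j
      have hyj := hy j
      simp only [hd] at hyj
      split_ifs at hyj with hj
      · have hy0 : y j ≠ 0 := by
          intro h0; rw [h0, zero_pow hq1] at hyj; exact zero_ne_one hyj
        exact ⟨y j, hy0, (if_pos hj).symm⟩
      · have hy0 : y j ≠ 0 := by
          intro h0; rw [h0, zero_pow (by omega)] at hyj; exact zero_ne_one hyj
        have hsq : IsSquare (y j) := by
          rw [FiniteField.isSquare_iff hchar hy0]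
          have hmod : Fintype.card K % 2 = 1 := by omega
          have heq : Fintype.card K / 2 = (Fintype.card K - 1) / 2 := by omega
          rw [heq]; exact hyj
        obtain ⟨x, hxx⟩ := hsq
        refine ⟨x, ?_, ?_⟩
        · rintro rfl; rw [mul_zero] at hxx; exact hy0 hxx
        · rw [if_neg hj, hxx, sq]
    choose x hx1 hx2 using key
    exact ⟨x, hx1, hx2⟩
  have hle : Ideal.span Gens ≤ MvPolynomial.vanishingIdeal K (degenerateTorus K k i) := by
    rw [Ideal.span_le]
    rintro p ⟨j, rfl⟩
    rw [SetLike.mem_coe, mem_vanishingIdeal_iff]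
    intro y hy
    rw [hgen j, map_sub, map_pow, map_one, aeval_X, htor1 y hy j, sub_self]
  refine le_antisymm (fun f hf => ?_) hle
  -- reduction modulo the ideal
  have hXd : ∀ j : Fin k, (Ideal.Quotient.mk (Ideal.span Gens)) (X j) ^ d j = 1 := by
    intro j
    have hmem : (X j ^ d j - 1 : MvPolynomial (Fin k) K) ∈ Ideal.span Gens :=
      Ideal.subset_span ⟨j, (hgen j).symm⟩
    have h0 := (Ideal.Quotient.eq_zero_iff_mem).mpr hmem
    rw [map_sub, map_pow, map_one, sub_eq_zero] at h0
    exact h0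
  have hpowred : ∀ (j : Fin k) (e : ℕ),
      (Ideal.Quotient.mk (Ideal.span Gens)) (X j) ^ e
        = (Ideal.Quotient.mk (Ideal.span Gens)) (X j) ^ (e % d j) := by
    intro j e
    conv_lhs => rw [← Nat.div_add_mod e (d j)]
    rw [pow_add, pow_mul, hXd j, one_pow, one_mul]
  set red : (Fin k →₀ ℕ) → (Fin k →₀ ℕ) :=
    fun u => Finsupp.equivFunOnFinite.symm fun j => u j % d j with hredd
  have hredapp : ∀ (u : Fin k →₀ ℕ) (j : Fin k), red u j = u j % d j := fun u j => rfl
  have hmon : ∀ (u : Fin k →₀ ℕ) (c : K),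
      Ideal.Quotient.mk (Ideal.span Gens) (monomial u c)
        = Ideal.Quotient.mk (Ideal.span Gens) (monomial (red u) c) := by
    intro u c
    rw [monomial_eq, monomial_eq,
      Finsupp.prod_fintype _ _ (fun j => pow_zero _),
      Finsupp.prod_fintype _ _ (fun j => pow_zero _),
      map_mul, map_mul, map_prod, map_prod]
    congr 1
    refine Finset.prod_congr rfl fun j _ => ?_
    rw [map_pow, map_pow, hredapp, hpowred]
  set r : MvPolynomial (Fin k) K := ∑ u ∈ f.support, monomial (red u) (coeff u f) with hr
  have hfr : f - r ∈ Ideal.span Gens := by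
    rw [← Ideal.Quotient.eq]
    conv_lhs => rw [f.as_sum]
    rw [hr, map_sum, map_sum]
    exact Finset.sum_congr rfl fun u _ => hmon u (coeff u f)
  have hrv : ∀ y ∈ degenerateTorus K k i, eval y r = 0 := by
    intro y hy
    have h1 : eval y f = 0 := hf y hy
    have h2 : eval y (f - r) = 0 := hle hfr y hy
    rw [map_sub, h1, zero_sub, neg_eq_zero] at h2
    exact h2
  set A : Fin k → Finset K := fun j => Finset.univ.filter fun z => z ^ d j = 1 with hA
  have hrdeg : ∀ j, r.degreeOf j < (A j).card := by
    intro j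
    have hdA : d j ≤ (A j).card := card_pow_roots (hdpos j) (hddvd j)
    refine lt_of_lt_of_le ?_ hdA
    refine lt_of_le_of_lt (degreeOf_sum_le _ _ _) ?_
    rw [Finset.sup_lt_iff (by simpa using hdpos j)]
    intro u hu
    by_cases hc : coeff u f = 0
    · rw [hc, monomial_zero, degreeOf_zero]; exact hdpos j
    · rw [degreeOf_monomial_eq _ _ hc, hredapp]
      exact Nat.mod_lt _ (hdpos j)
  have hr0 : r = 0 := by
    refine grid_vanish k A r hrdeg ?_
    intro z hz
    refine hrv z (htor2 z fun j => ?_)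
    have := hz j
    simp only [hA, Finset.mem_filter, Finset.mem_univ, true_and] at this
    exact this
  have hfeq : f = f - r := by rw [hr0, sub_zero]
  rw [hfeq]
  exact hfr
end

section
/- For 0 ≤ i ≤ γ < k and every d ≥ 1, the affine Hilbert function of the degenerate torus X*_i satisfies H_{X*_i}(d) = |A_i(d)|, where A_i(d) is the set of monomials t_1^{a_1}⋯t_k^{a_k} with 0 ≤ a_j < q−1 for 1 ≤ j ≤ i, 0 ≤ a_j < (q−1)/2 for i+1 ≤ j ≤ k, and a_1+⋯+a_k ≤ d. -/
open MvPolynomial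

namespace HilbertTorusAux

variable {K : Type} [Field K] {k : ℕ}

/-- The product set determined by finsets `S j`. -/
def prodSet (S : Fin k → Finset K) : Set (Fin k → K) := {y | ∀ j, y j ∈ S j}

noncomputable instance [Fintype K] (S : Fin k → Finset K) : Fintype (prodSet S) :=
  Fintype.ofFinite _

/-- Monomial functions on the product set. -/
noncomputable def E (S : Fin k → Finset K) (a : Fin k → ℕ) : prodSet S → K :=
  fun x => ∏ j, (x : Fin k → K) j ^ a j

/-- `prodSet S` is equivalent to the dependent product of the `S j`. -/
def prodSetEquiv (S : Fin k → Finset K) : prodSet S ≃ ∀ j, ↥(S j) where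
  toFun y j := ⟨y.1 j, y.2 j⟩
  invFun x := ⟨fun j => x j, fun j => (x j).2⟩
  left_inv _ := rfl
  right_inv _ := rfl

lemma card_prodSet [Fintype K] (S : Fin k → Finset K) :
    Fintype.card (prodSet S) = ∏ j, (S j).card := by
  rw [Fintype.card_congr (prodSetEquiv S), Fintype.card_pi]
  simp

/-- The canonical monomial family indexed by exponent tuples below the degrees. -/
noncomputable def V (S : Fin k → Finset K) (σ : ∀ j : Fin k, Fin (S j).card) :
    prodSet S → K :=
  E S fun j => σ j

/-- Products of univariate polynomials of small degree lie in the span of `V`. -/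
lemma prod_eval_mem_span (S : Fin k → Finset K) (p : Fin k → Polynomial K)
    (hp : ∀ j, (p j).natDegree < (S j).card) :
    (fun x : prodSet S => ∏ j, (p j).eval ((x : Fin k → K) j)) ∈
      Submodule.span K (Set.range (V S)) := by
  have hfun : (fun x : prodSet S => ∏ j, (p j).eval ((x : Fin k → K) j)) =
      ∑ a ∈ Fintype.piFinset (fun j => Finset.range (S j).card),
        (∏ j, (p j).coeff (a j)) • E S a := by
    funext x
    rw [Finset.sum_apply]
    have : ∀ j, (p j).eval ((x : Fin k → K) j) =
        ∑ t ∈ Finset.range (S j).card, (p j).coeff t * (x : Fin k → K) j ^ t :=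
      fun j => Polynomial.eval_eq_sum_range' (hp j) _
    simp_rw [this]
    rw [Finset.prod_univ_sum]
    refine Finset.sum_congr rfl fun a _ => ?_
    rw [Finset.prod_mul_distrib]
    simp [E, Pi.smul_apply, smul_eq_mul]
  rw [hfun]
  refine Submodule.sum_mem _ fun a ha => Submodule.smul_mem _ _ ?_
  refine Submodule.subset_span ⟨fun j => ⟨a j, ?_⟩, rfl⟩
  · have := Fintype.mem_piFinset.mp ha j
    simpa using this

/-- Every function on the product set lies in the span of the monomial family. -/
lemma top_le_span_V [Fintype K] (S : Fin k → Finset K) :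
    ⊤ ≤ Submodule.span K (Set.range (V S)) := by
  intro f _
  classical
  have hδ : ∀ y : prodSet S,
      (fun x : prodSet S => if x = y then (1 : K) else 0) ∈
        Submodule.span K (Set.range (V S)) := by
    intro y
    have hfun : (fun x : prodSet S => if x = y then (1 : K) else 0) =
        fun x : prodSet S =>
          ∏ j, (Lagrange.basis (S j) id ((y : Fin k → K) j)).eval ((x : Fin k → K) j) := by
      funext x
      by_cases hxy : x = y
      · subst hxy
        rw [if_pos rfl]
        refine (Finset.prod_eq_one fun j _ => ?_).symm
        exact Lagrange.eval_basis_self (Set.injOn_id _) (x.2 j)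
      · rw [if_neg hxy]
        have : ∃ j, (x : Fin k → K) j ≠ (y : Fin k → K) j := by
          by_contra h
          push_neg at h
          exact hxy (Subtype.ext (funext h))
        obtain ⟨j, hj⟩ := this
        refine (Finset.prod_eq_zero (Finset.mem_univ j) ?_).symm
        exact Lagrange.eval_basis_of_ne (v := (id : K → K)) (Ne.symm hj) (x.2 j)
    rw [hfun]
    refine prod_eval_mem_span S _ fun j => ?_
    rw [Lagrange.natDegree_basis (Set.injOn_id _) (y.2 j)]
    have : 0 < (S j).card := Finset.card_pos.mpr ⟨_, y.2 j⟩
    omega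
  have hf : f = ∑ y : prodSet S, f y • (fun x : prodSet S => if x = y then (1 : K) else 0) := by
    funext x
    rw [Finset.sum_apply]
    simp
  rw [hf]
  exact Submodule.sum_mem _ fun y _ => Submodule.smul_mem _ _ (hδ y)

lemma linearIndependent_V [Fintype K] (S : Fin k → Finset K) :
    LinearIndependent K (V S) := by
  have hcard : Fintype.card (∀ j : Fin k, Fin (S j).card) =
      Module.finrank K (prodSet S → K) := by
    rw [Module.finrank_pi, Fintype.card_pi, card_prodSet]
    simp
  have hcoe := coe_basisOfTopLeSpanOfCardEqFinrank (V S) (top_le_span_V S) hcard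
  have h := (basisOfTopLeSpanOfCardEqFinrank (V S) (top_le_span_V S) hcard).linearIndependent
  rwa [hcoe] at h

/-- Reduction: every monomial function is in the span of reduced monomials of no
larger degree. -/
lemma E_mem_span_reduced (S : Fin k → Finset K) (n : ℕ) :
    ∀ (N : ℕ) (a : Fin k → ℕ), (∑ j, a j) ≤ N → (∑ j, a j) ≤ n →
      E S a ∈ Submodule.span K
        (E S '' {b | (∀ j, b j < (S j).card) ∧ (∑ j, b j) ≤ n}) := by
  intro N
  induction N using Nat.strong_induction_on with
  | _ N ihN =>
    intro a haN han
    classical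
    by_cases hred : ∀ j, a j < (S j).card
    · exact Submodule.subset_span ⟨a, ⟨hred, han⟩, rfl⟩
    push_neg at hred
    obtain ⟨j, hj⟩ := hred
    set m := (S j).card with hmdef
    set P : Polynomial K := ∏ s ∈ S j, (Polynomial.X - Polynomial.C s) with hP
    have hPm : P.Monic := Polynomial.monic_prod_of_monic _ _ fun s _ =>
      Polynomial.monic_X_sub_C s
    have hPdeg : P.natDegree = m := by
      rw [hP, Polynomial.natDegree_prod _ _ fun s _ => Polynomial.X_sub_C_ne_zero s]
      simp [hmdef]
    have hPeval : ∀ x ∈ S j, P.eval x = 0 := by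
      intro x hx
      rw [hP, Polynomial.eval_prod]
      exact Finset.prod_eq_zero hx (by simp)
    have hpow : ∀ x ∈ S j, x ^ m = ∑ t ∈ Finset.range m, -P.coeff t * x ^ t := by
      intro x hx
      have h1 : P.eval x = ∑ t ∈ Finset.range (m + 1), P.coeff t * x ^ t :=
        Polynomial.eval_eq_sum_range' (by omega) x
      rw [Finset.sum_range_succ, ← hPdeg, hPm.coeff_natDegree, hPdeg, one_mul,
        hPeval x hx] at h1
      have h2 := eq_neg_of_add_eq_zero_right h1.symm
      rw [h2, ← Finset.sum_neg_distrib]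
      exact Finset.sum_congr rfl fun t _ => by ring
    have hE : E S a = ∑ t ∈ Finset.range m,
        (-P.coeff t) • E S (Function.update a j (a j - m + t)) := by
      funext x
      rw [Finset.sum_apply]
      have hxj : (x : Fin k → K) j ∈ S j := x.2 j
      have key : ∀ (u : Fin k → ℕ), E S u x = (x : Fin k → K) j ^ u j *
          ∏ l ∈ Finset.univ.erase j, (x : Fin k → K) l ^ u l :=
        fun u => (Finset.mul_prod_erase _ _ (Finset.mem_univ j)).symm
      have herase : ∀ c : ℕ,
          (∏ l ∈ Finset.univ.erase j, (x : Fin k → K) l ^ (Function.update a j c l)) =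
            ∏ l ∈ Finset.univ.erase j, (x : Fin k → K) l ^ a l :=
        fun c => Finset.prod_congr rfl fun l hl => by
          rw [Function.update_of_ne (Finset.mem_erase.mp hl).1]
      have hR : ∀ t, E S (Function.update a j (a j - m + t)) x =
          (x : Fin k → K) j ^ (a j - m + t) *
            ∏ l ∈ Finset.univ.erase j, (x : Fin k → K) l ^ a l := by
        intro t
        rw [key, Function.update_self, herase]
      calc E S a x
          = (x : Fin k → K) j ^ (a j - m) * (x : Fin k → K) j ^ m *
              ∏ l ∈ Finset.univ.erase j, (x : Fin k → K) l ^ a l := by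
            rw [key a, ← pow_add, Nat.sub_add_cancel hj]
        _ = ∑ t ∈ Finset.range m, -P.coeff t *
              ((x : Fin k → K) j ^ (a j - m + t) *
                ∏ l ∈ Finset.univ.erase j, (x : Fin k → K) l ^ a l) := by
            rw [hpow _ hxj, Finset.mul_sum, Finset.sum_mul]
            exact Finset.sum_congr rfl fun t _ => by rw [pow_add]; ring
        _ = ∑ t ∈ Finset.range m, ((-P.coeff t) •
              E S (Function.update a j (a j - m + t))) x := by
            exact Finset.sum_congr rfl fun t _ => by
              rw [Pi.smul_apply, hR, smul_eq_mul]
    rw [hE]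
    refine Submodule.sum_mem _ fun t ht => Submodule.smul_mem _ _ ?_
    have hsum : ∀ c : ℕ, ∑ l, Function.update a j c l =
        c + ∑ l ∈ Finset.univ.erase j, a l := by
      intro c
      rw [← Finset.add_sum_erase _ _ (Finset.mem_univ j), Function.update_self]
      exact congrArg (_ + ·) (Finset.sum_congr rfl fun l hl => by
        rw [Function.update_of_ne (Finset.mem_erase.mp hl).1])
    have hsuma : ∑ l, a l = a j + ∑ l ∈ Finset.univ.erase j, a l :=
      (Finset.add_sum_erase _ _ (Finset.mem_univ j)).symm
    have htm : t < m := Finset.mem_range.mp ht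
    have hjle : m ≤ a j := hj
    refine ihN (a j - m + t + ∑ l ∈ Finset.univ.erase j, a l) (by omega) _
      (le_of_eq (hsum _)) ?_
    rw [hsum]
    omega

/-- Evaluation on a product set, as a linear map on polynomials of degree at most `d`. -/
noncomputable def L (S : Fin k → Finset K) (d : ℕ) :
    ↥(restrictTotalDegree (Fin k) K d) →ₗ[K] (prodSet S → K) where
  toFun f := fun x => eval (x : Fin k → K) (f : MvPolynomial (Fin k) K)
  map_add' f g := by funext x; simp
  map_smul' c f := by funext x; simp [MvPolynomial.smul_eval]

lemma ker_L (S : Fin k → Finset K) (d : ℕ) :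
    Submodule.comap (restrictTotalDegree (Fin k) K d).subtype
        (Submodule.restrictScalars K (vanishingIdeal K (prodSet S))) =
      LinearMap.ker (L S d) := by
  ext f
  simp only [Submodule.mem_comap, Submodule.restrictScalars_mem, Submodule.coe_subtype,
    mem_vanishingIdeal_iff, LinearMap.mem_ker]
  constructor
  · intro h
    funext x
    exact h x x.2
  · intro h x hx
    exact congrFun h ⟨x, hx⟩

lemma range_L (S : Fin k → Finset K) (d : ℕ) :
    LinearMap.range (L S d) =
      Submodule.span K (E S '' {b | (∀ j, b j < (S j).card) ∧ (∑ j, b j) ≤ d}) := by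
  apply le_antisymm
  · rintro _ ⟨f, rfl⟩
    have hdeg : (f : MvPolynomial (Fin k) K).totalDegree ≤ d :=
      (mem_restrictTotalDegree _ _ _).mp f.2
    have hfun : L S d f = ∑ u ∈ (f : MvPolynomial (Fin k) K).support,
        coeff u (f : MvPolynomial (Fin k) K) • E S (fun j => u j) := by
      funext x
      rw [Finset.sum_apply]
      show eval (x : Fin k → K) (f : MvPolynomial (Fin k) K) = _
      rw [eval_eq']
      exact Finset.sum_congr rfl fun u _ => by simp [E]
    rw [hfun]
    refine Submodule.sum_mem _ fun u hu => Submodule.smul_mem _ _ ?_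
    have hle : (∑ j, u j) ≤ d := by
      have h1 : (u.sum fun _ e => e) ≤ (f : MvPolynomial (Fin k) K).totalDegree :=
        le_totalDegree hu
      have h2 : (u.sum fun _ e => e) = ∑ j, u j :=
        Finsupp.sum_fintype _ _ fun _ => rfl
      omega
    exact E_mem_span_reduced S d (∑ j, u j) _ le_rfl hle
  · rw [Submodule.span_le]
    rintro _ ⟨a, ⟨_, had⟩, rfl⟩
    set u : Fin k →₀ ℕ := Finsupp.equivFunOnFinite.symm a with hudef
    have hu : ⇑u = a := Finsupp.equivFunOnFinite.apply_symm_apply a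
    have husum : (u.sum fun _ e => e) = ∑ j, u j :=
      Finsupp.sum_fintype _ _ fun _ => rfl
    have hmem : monomial u (1 : K) ∈ restrictTotalDegree (Fin k) K d := by
      rw [mem_restrictTotalDegree, totalDegree_monomial u (one_ne_zero : (1:K) ≠ 0), husum]
      calc (∑ j, u j) = ∑ j, a j := by rw [hu]
        _ ≤ d := had
    refine ⟨⟨monomial u 1, hmem⟩, ?_⟩
    funext x
    show eval (x : Fin k → K) (monomial u (1:K)) = E S a x
    rw [eval_monomial, one_mul, Finsupp.prod_fintype _ _ fun j => pow_zero _]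
    simp [E, hu]

/-- The affine Hilbert function of a product set counts reduced monomials. -/
theorem hilbert_prodSet [Fintype K] (S : Fin k → Finset K) (d : ℕ) :
    affineHilbertFunction K (prodSet S) d =
      {a : Fin k → ℕ | (∀ j, a j < (S j).card) ∧ (∑ j, a j) ≤ d}.ncard := by
  classical
  have h0 : affineHilbertFunction K (prodSet S) d
      = Module.finrank K (↥(restrictTotalDegree (Fin k) K d) ⧸ LinearMap.ker (L S d)) := by
    unfold affineHilbertFunction
    rw [ker_L S d]
  rw [h0, (LinearMap.quotKerEquivRange (L S d)).finrank_eq, range_L]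
  set B : Set (Fin k → ℕ) := {a | (∀ j, a j < (S j).card) ∧ (∑ j, a j) ≤ d} with hB
  have hBsub : B ⊆ ↑(Fintype.piFinset fun j => Finset.range (S j).card) := by
    intro a ha
    simp only [Finset.coe_sort_coe, Finset.mem_coe, Fintype.mem_piFinset, Finset.mem_range]
    exact ha.1
  have hBfin : B.Finite := Set.Finite.subset (Finset.finite_toSet _) hBsub
  haveI : Fintype B := hBfin.fintype
  have hli : LinearIndependent K (fun a : B => E S a.1) := by
    have hV := linearIndependent_V S
    have hginj : Function.Injective
        (fun a : B => (fun j => (⟨a.1 j, a.2.1 j⟩ : Fin (S j).card))) := by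
      intro a b h
      apply Subtype.ext
      funext j
      exact congrArg Fin.val (congrFun h j)
    have h2 := hV.comp (fun a : B => (fun j => (⟨a.1 j, a.2.1 j⟩ : Fin (S j).card))) hginj
    exact h2
  have him : E S '' B = Set.range (fun a : B => E S a.1) := Set.image_eq_range _ _
  rw [him]
  rw [finrank_span_eq_card hli]
  rw [Set.ncard_eq_toFinset_card' B, Set.toFinset_card]

end HilbertTorusAux

/-- For `0 ≤ i ≤ γ < k` and every `d ≥ 1`, the affine Hilbert function of
the degenerate torus `X*_i` satisfies `H_{X*_i}(d) = |A_i(d)|`, where `A_i(d)` is the set of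
(exponent vectors of) monomials `t₁^{a₁}⋯t_k^{a_k}` with `a_j < q−1` for `j ≤ i`,
`a_j < (q−1)/2` for `j > i`, and total degree at most `d`. -/
theorem hilbert_degenerateTorus (q k γ i : ℕ) (hiγ : i ≤ γ) (hγk : γ < k)
    (K : Type) [Field K] [Fintype K] (hq : Fintype.card K = q) (hq2 : 2 ∣ q - 1)
    (d : ℕ) (hd : 1 ≤ d) :
    affineHilbertFunction K (degenerateTorus K k i) d =
      {a : Fin k → ℕ | (∀ j : Fin k, (j : ℕ) < i → a j < q - 1) ∧
        (∀ j : Fin k, i ≤ (j : ℕ) → a j < (q - 1) / 2) ∧ ∑ j, a j ≤ d}.ncard := by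
  classical
  have hq2' : 2 ≤ q := hq ▸ Fintype.one_lt_card
  obtain ⟨c, hc⟩ := hq2
  have hqodd : q % 2 = 1 := by omega
  have h2K : (2 : K) ≠ 0 := by
    intro h2
    have hchar : ringChar K ∣ 2 := ringChar.dvd (by exact_mod_cast h2)
    rcases (Nat.dvd_prime Nat.prime_two).mp hchar with h | h
    · exact CharP.ringChar_ne_one h
    · have heven := FiniteField.even_card_iff_char_two.mp h
      rw [hq] at heven
      omega
  set A : Finset K := Finset.univ.erase 0 with hA
  set Sq : Finset K := A.image (fun x => x ^ 2) with hSq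
  set S : Fin k → Finset K := fun j => if (j : ℕ) < i then A else Sq with hS
  have hX : degenerateTorus K k i = HilbertTorusAux.prodSet S := by
    ext y
    constructor
    · rintro ⟨x, hx0, hxy⟩ j
      show y j ∈ S j
      simp only [hS]
      by_cases hji : (j : ℕ) < i
      · rw [if_pos hji, hxy j, if_pos hji]
        exact Finset.mem_erase.mpr ⟨hx0 j, Finset.mem_univ _⟩
      · rw [if_neg hji, hxy j, if_neg hji, hSq]
        exact Finset.mem_image.mpr ⟨x j, Finset.mem_erase.mpr ⟨hx0 j, Finset.mem_univ _⟩, rfl⟩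
    · intro hy
      have hw : ∀ j : Fin k, ∃ w : K, w ≠ 0 ∧ y j = (if (j : ℕ) < i then w else w ^ 2) := by
        intro j
        have hj : y j ∈ S j := hy j
        simp only [hS] at hj
        by_cases hji : (j : ℕ) < i
        · rw [if_pos hji, hA] at hj
          exact ⟨y j, (Finset.mem_erase.mp hj).1, by rw [if_pos hji]⟩
        · rw [if_neg hji, hSq] at hj
          obtain ⟨w, hwA, hwy⟩ := Finset.mem_image.mp hj
          exact ⟨w, (Finset.mem_erase.mp hwA).1, by rw [if_neg hji, hwy]⟩
      choose x hx0 hxy using hw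
      exact ⟨x, hx0, hxy⟩
  have hcard1 : A.card = q - 1 := by
    rw [hA, Finset.card_erase_of_mem (Finset.mem_univ _), Finset.card_univ, hq]
  have hcard2 : Sq.card = (q - 1) / 2 := by
    have hsum : A.card = ∑ b ∈ Sq, (A.filter (fun x => x ^ 2 = b)).card := by
      rw [hSq]; exact Finset.card_eq_sum_card_image _ _
    have hfib : ∀ b ∈ Sq, (A.filter (fun x => x ^ 2 = b)).card = 2 := by
      intro b hb
      obtain ⟨w, hwA, rfl⟩ := Finset.mem_image.mp hb
      have hw0 : w ≠ 0 := (Finset.mem_erase.mp hwA).1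
      have hfil : A.filter (fun x => x ^ 2 = w ^ 2) = {w, -w} := by
        ext x
        simp only [Finset.mem_filter, Finset.mem_insert, Finset.mem_singleton, hA,
          Finset.mem_erase, Finset.mem_univ, and_true, true_and]
        constructor
        · rintro ⟨hx0, hxw⟩
          have hz : (x - w) * (x + w) = 0 := by linear_combination hxw
          rcases mul_eq_zero.mp hz with h | h
          · exact Or.inl (sub_eq_zero.mp h)
          · exact Or.inr (eq_neg_of_add_eq_zero_left h)
        · rintro (rfl | rfl)
          · exact ⟨hw0, rfl⟩
          · exact ⟨neg_ne_zero.mpr hw0, by ring⟩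
      rw [hfil, Finset.card_insert_of_notMem, Finset.card_singleton]
      simp only [Finset.mem_singleton]
      intro hww
      have h2w : (2 : K) * w = 0 := by linear_combination hww
      exact h2K ((mul_eq_zero.mp h2w).resolve_right hw0)
    rw [Finset.sum_congr rfl hfib, Finset.sum_const, smul_eq_mul, hcard1] at hsum
    omega
  rw [hX, HilbertTorusAux.hilbert_prodSet S d]
  congr 1
  ext a
  simp only [Set.mem_setOf_eq]
  have hSc : ∀ j : Fin k, (S j).card = if (j : ℕ) < i then q - 1 else (q - 1) / 2 := by
    intro j
    simp only [hS]
    by_cases hji : (j : ℕ) < i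
    · rw [if_pos hji, if_pos hji, hcard1]
    · rw [if_neg hji, if_neg hji, hcard2]
  constructor
  · rintro ⟨h1, h2⟩
    refine ⟨fun j hj => ?_, fun j hj => ?_, h2⟩
    · have := h1 j; rwa [hSc j, if_pos hj] at this
    · have := h1 j; rwa [hSc j, if_neg (not_lt.mpr hj)] at this
  · rintro ⟨h1, h2, h3⟩
    refine ⟨fun j => ?_, h3⟩
    rw [hSc j]
    by_cases hji : (j : ℕ) < i
    · rw [if_pos hji]; exact h1 j hji
    · rw [if_neg hji]; exact h2 j (not_lt.mp hji)
end
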